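/- (Langlands' combinatorial lemma.) For every λ ∈ V there exist unique coefficients a_i ≥ 0 and b_i ≥ 0 (i ∈ I) satisfying a_i · b_i = 0 for every i, such that λ = Σ_i a_i ω_i − Σ_i b_i α_i. -/

import Mathlib

open RealInnerProductSpace

/-- Langlands' combinatorial lemma: if `(α i)` is a basis of a real inner product space with
pairwise nonpositive inner products and `(ω i)` is the dual basis, then every `λ` has a unique
decomposition `λ = Σ a i • ω i − Σ b i • α i` with `a i, b i ≥ 0` and `a i * b i = 0`. -/
theorem stmt_5 {V : Type*} [NormedAddCommGroup V] [InnerProductSpace ℝ V]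
    [FiniteDimensional ℝ V] {ι : Type*} [Fintype ι] [DecidableEq ι] (α : Module.Basis ι ℝ V)
    (hα : ∀ i j, i ≠ j → ⟪α i, α j⟫ ≤ 0)
    (ω : ι → V) (hω : ∀ i j, ⟪ω i, α j⟫ = if i = j then (1 : ℝ) else 0)
    (lam : V) :
    ∃! ab : (ι → ℝ) × (ι → ℝ),
      (∀ i, 0 ≤ ab.1 i) ∧ (∀ i, 0 ≤ ab.2 i) ∧ (∀ i, ab.1 i * ab.2 i = 0) ∧
      lam = ∑ i, ab.1 i • ω i - ∑ i, ab.2 i • α i := by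
  classical
  -- key computations
  have key1 : ∀ (c : ι → ℝ) (j : ι), ⟪∑ i, c i • ω i, α j⟫ = c j := by
    intro c j
    rw [sum_inner]
    simp [real_inner_smul_left, hω]
  have key2 : ∀ (c : ι → ℝ) (j : ι), ⟪∑ i, c i • α i, ω j⟫ = c j := by
    intro c j
    rw [sum_inner]
    simp only [real_inner_smul_left]
    simp [real_inner_comm, hω]
  -- `ω` expansion
  have expand_ω : ∀ v : V, v = ∑ i, ⟪v, α i⟫ • ω i := by
    have hsurj : Function.Surjective (Fintype.linearCombination ℝ ω) := by
      rw [← LinearMap.injective_iff_surjective_of_finrank_eq_finrank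
        (by rw [Module.finrank_fintype_fun_eq_card, Module.finrank_eq_card_basis α])]
      intro c c' h
      funext j
      have := congrArg (fun v => ⟪v, α j⟫) h
      simpa [Fintype.linearCombination_apply, key1] using this
    intro v
    obtain ⟨c, hc⟩ := hsurj v
    rw [Fintype.linearCombination_apply] at hc
    subst hc
    congr 1
    funext i
    rw [key1]
  -- `α` expansion
  have expand_α : ∀ v : V, v = ∑ i, ⟪v, ω i⟫ • α i := by
    intro v
    have h : ∀ i, ⟪v, ω i⟫ = α.repr v i := by
      intro i
      conv_lhs => rw [← α.sum_repr v]
      exact key2 _ i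
    simp only [h]
    exact (α.sum_repr v).symm
  -- inner product of the two kinds of sums
  have ipq : ∀ (c d : ι → ℝ), ⟪∑ i, c i • ω i, ∑ i, d i • α i⟫ = ∑ i, c i * d i := by
    intro c d
    rw [inner_sum]
    simp only [real_inner_smul_right, key1]
    exact Finset.sum_congr rfl fun i _ => mul_comm _ _
  -- uniqueness
  have uniq : ∀ a₁ b₁ a₂ b₂ : ι → ℝ, (∀ i, 0 ≤ a₁ i) → (∀ i, 0 ≤ b₁ i) →
      (∀ i, a₁ i * b₁ i = 0) → lam = ∑ i, a₁ i • ω i - ∑ i, b₁ i • α i →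
      (∀ i, 0 ≤ a₂ i) → (∀ i, 0 ≤ b₂ i) → (∀ i, a₂ i * b₂ i = 0) →
      lam = ∑ i, a₂ i • ω i - ∑ i, b₂ i • α i → a₁ = a₂ ∧ b₁ = b₂ := by
    intro a₁ b₁ a₂ b₂ ha₁ hb₁ hab₁ hl₁ ha₂ hb₂ hab₂ hl₂
    set p₁ := ∑ i, a₁ i • ω i with hp₁
    set q₁ := ∑ i, b₁ i • α i with hq₁
    set p₂ := ∑ i, a₂ i • ω i with hp₂
    set q₂ := ∑ i, b₂ i • α i with hq₂
    have h11 : ⟪p₁, q₁⟫ = 0 := by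
      rw [hp₁, hq₁, ipq]
      exact Finset.sum_eq_zero fun i _ => hab₁ i
    have h22 : ⟪p₂, q₂⟫ = 0 := by
      rw [hp₂, hq₂, ipq]
      exact Finset.sum_eq_zero fun i _ => hab₂ i
    have h12 : 0 ≤ ⟪p₁, q₂⟫ := by
      rw [hp₁, hq₂, ipq]
      exact Finset.sum_nonneg fun i _ => mul_nonneg (ha₁ i) (hb₂ i)
    have h21 : 0 ≤ ⟪p₂, q₁⟫ := by
      rw [hp₂, hq₁, ipq]
      exact Finset.sum_nonneg fun i _ => mul_nonneg (ha₂ i) (hb₁ i)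
    have hdiff : p₁ - p₂ = q₁ - q₂ := by
      have := hl₁.symm.trans hl₂
      rw [sub_eq_sub_iff_sub_eq_sub] at this
      exact this
    have hpp : p₁ = p₂ := by
      have hle : ⟪p₁ - p₂, p₁ - p₂⟫ ≤ 0 := by
        nth_rewrite 2 [hdiff]
        rw [inner_sub_left, inner_sub_right, inner_sub_right]
        linarith [real_inner_comm p₂ q₁]
      have := real_inner_self_nonpos.mp hle
      rwa [sub_eq_zero] at this
    have hqq : q₁ = q₂ := by
      rw [hpp, sub_self] at hdiff
      exact sub_eq_zero.mp hdiff.symm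
    constructor
    · funext j
      have := congrArg (fun v => ⟪v, α j⟫) hpp
      simpa [hp₁, hp₂, key1] using this
    · funext j
      have := congrArg (fun v => ⟪v, ω j⟫) hqq
      simpa [hq₁, hq₂, key2] using this
  -- existence via projection onto the dominant cone
  set K : Set V := {v | ∀ i, 0 ≤ ⟪v, α i⟫} with hKdef
  have hKconv : Convex ℝ K := by
    intro x hx y hy s t hs ht _ i
    rw [inner_add_left, real_inner_smul_left, real_inner_smul_left]
    exact add_nonneg (mul_nonneg hs (hx i)) (mul_nonneg ht (hy i))
  have hKclosed : IsClosed K := by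
    have : K = ⋂ i, {v : V | 0 ≤ ⟪v, α i⟫} := by ext v; simp [hKdef]
    rw [this]
    exact isClosed_iInter fun i =>
      isClosed_le continuous_const (Continuous.inner continuous_id continuous_const)
  have h0K : (0 : V) ∈ K := by intro i; simp
  obtain ⟨p, hpK, hmin⟩ := exists_norm_eq_iInf_of_complete_convex
    ⟨0, h0K⟩ hKclosed.isComplete hKconv lam
  rw [norm_eq_iInf_iff_real_inner_le_zero hKconv hpK] at hmin
  set q := p - lam with hqdef
  set a : ι → ℝ := fun i => ⟪p, α i⟫ with hadef
  set b : ι → ℝ := fun i => ⟪q, ω i⟫ with hbdef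
  have hqneg : q = -(lam - p) := by rw [hqdef]; abel
  have hb0 : ∀ i, 0 ≤ b i := by
    intro i
    have hw : p + ω i ∈ K := by
      intro j
      rw [inner_add_left, hω]
      have := hpK j
      split <;> linarith
    have h := hmin _ hw
    rw [add_sub_cancel_left] at h
    rw [hbdef]
    simp only [hqneg, inner_neg_left]
    linarith
  have hqp : ⟪lam - p, p⟫ = 0 := by
    have h0 := hmin 0 h0K
    rw [zero_sub, inner_neg_right] at h0
    have h2 : p + p ∈ K := fun j => by
      rw [inner_add_left]; have := hpK j; linarith
    have h2' := hmin _ h2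
    rw [add_sub_cancel_right] at h2'
    linarith
  have hpexp : p = ∑ i, a i • ω i := expand_ω p
  have hqexp : q = ∑ i, b i • α i := expand_α q
  have habsum : ∑ i, a i * b i = 0 := by
    have : ⟪p, q⟫ = ∑ i, a i * b i := by
      conv_lhs => rw [hpexp, hqexp]
      exact ipq a b
    rw [← this, hqneg, inner_neg_right, real_inner_comm, hqp, neg_zero]
  have hab0 : ∀ i, a i * b i = 0 := by
    intro i
    have := (Finset.sum_eq_zero_iff_of_nonneg
      (fun i _ => mul_nonneg (hpK i) (hb0 i))).mp habsum i (Finset.mem_univ i)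
    exact this
  refine ⟨(a, b), ⟨hpK, hb0, hab0, ?_⟩, ?_⟩
  · rw [← hpexp, ← hqexp, hqdef]
    abel
  · rintro ⟨a', b'⟩ ⟨ha', hb', hab', hl'⟩
    obtain ⟨h1, h2⟩ := uniq a' b' a b ha' hb' hab' hl' hpK hb0 hab0
      (by rw [← hpexp, ← hqexp, hqdef]; abel)
    simp [h1, h2]
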